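/- With $\mathfrak{g}$, $\mathfrak{t}$, $F$ as above, for any $y \in \mathfrak{g}$ and $s \in \mathbb{R}$, one has $F\big(e^{-s\,\mathrm{ad}_{Fy}} y\big) = F y$; consequently the curve $y(s) = e^{-s\,\mathrm{ad}_{Fy_0}} y_0$ satisfies the differential equation $\dot{y}(s) = [y(s), F y(s)]$ with $y(0) = y_0$. -/

import Mathlib

open scoped RealInnerProductSpace

set_option maxHeartbeats 1000000 in
set_option synthInstance.maxHeartbeats 400000 in
/-- With `𝔤`, `𝔱`, `F` as before, `F (e^{-s ad_{F y₀}} y₀) = F y₀` for all `s`,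
and consequently the curve `y(s) = e^{-s ad_{F y₀}} y₀` solves `ẏ = [y, F y]`, `y(0) = y₀`. -/
theorem exp_curve_solves_ode
    {g : Type*} [NormedAddCommGroup g] [InnerProductSpace ℝ g] [FiniteDimensional ℝ g]
    (l : g →ₗ[ℝ] g →ₗ[ℝ] g)
    (hlalt : ∀ X : g, l X X = 0)
    (hljac : ∀ X Y Z : g, l X (l Y Z) = l (l X Y) Z + l Y (l X Z))
    (hinv : ∀ X Y Z : g, ⟪l X Y, Z⟫ + ⟪Y, l X Z⟫ = 0)
    (t : Submodule ℝ g)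
    (htsub : ∀ A ∈ t, ∀ B ∈ t, l A B ∈ t)
    (habelian : ∀ A ∈ t, ∀ B ∈ t, l A B = 0)
    (F : g →ₗ[ℝ] g)
    (hFsa : ∀ v w : g, ⟪F v, w⟫ = ⟪v, F w⟫)
    (hFim : ∀ v : g, F v ∈ t)
    (hFperp : ∀ v ∈ tᗮ, F v = 0)
    (y₀ : g) :
    (∀ s : ℝ,
      F (NormedSpace.exp ((-s) • LinearMap.toContinuousLinearMap (l (F y₀))) y₀) = F y₀)
    ∧ (NormedSpace.exp ((-(0:ℝ)) • LinearMap.toContinuousLinearMap (l (F y₀))) y₀ = y₀)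
    ∧ (∀ s : ℝ,
        HasDerivAt
          (fun s' : ℝ =>
            NormedSpace.exp ((-s') • LinearMap.toContinuousLinearMap (l (F y₀))) y₀)
          (l (NormedSpace.exp ((-s) • LinearMap.toContinuousLinearMap (l (F y₀))) y₀)
            (F (NormedSpace.exp ((-s) • LinearMap.toContinuousLinearMap (l (F y₀))) y₀)))
          s) := by
  set A : g →L[ℝ] g := LinearMap.toContinuousLinearMap (l (F y₀)) with hA
  have hAapp : ∀ v : g, A v = l (F y₀) v := fun v => rfl
  -- antisymmetry of the bracket
  have hanti : ∀ X Y : g, l X Y = - l Y X := by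
    intro X Y
    have h := hlalt (X + Y)
    simp only [map_add, LinearMap.add_apply, hlalt, zero_add, add_zero] at h
    exact eq_neg_of_add_eq_zero_left (by rw [add_comm]; exact h)
  -- F ∘ ad_{F y₀} = 0
  have key1 : ∀ v : g, F (l (F y₀) v) = 0 := by
    intro v
    set u := l (F y₀) v with hu
    have h0 : l (F y₀) (F (F u)) = 0 := habelian _ (hFim y₀) _ (hFim _)
    have h2 := hinv (F y₀) v (F (F u))
    rw [h0, inner_zero_right, add_zero] at h2
    have h3 : ⟪F u, F u⟫ = 0 := by
      rw [hFsa u (F u)]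
      exact h2
    exact inner_self_eq_zero.mp h3
  -- F is constant along the exponential curve
  have key2 : ∀ s : ℝ, F (NormedSpace.exp ((-s) • A) y₀) = F y₀ := by
    intro s
    set B : g →L[ℝ] g := (-s) • A with hB
    have hsum : Summable fun n : ℕ => ((n.factorial : ℝ)⁻¹) • B ^ n :=
      NormedSpace.expSeries_summable' (𝕂 := ℝ) B
    have h1 : NormedSpace.exp B y₀ = ∑' n : ℕ, ((n.factorial : ℝ)⁻¹) • (B ^ n) y₀ := by
      rw [NormedSpace.exp_eq_tsum ℝ]
      have := (ContinuousLinearMap.apply ℝ g y₀).map_tsum hsum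
      simpa using this
    have hsum2 : Summable fun n : ℕ => ((n.factorial : ℝ)⁻¹) • (B ^ n) y₀ := by
      have := hsum.map (ContinuousLinearMap.apply ℝ g y₀).toLinearMap.toAddMonoidHom
        (ContinuousLinearMap.apply ℝ g y₀).continuous
      exact this
    have h2 : F (NormedSpace.exp B y₀)
        = ∑' n : ℕ, ((n.factorial : ℝ)⁻¹) • F ((B ^ n) y₀) := by
      rw [h1]
      have := (LinearMap.toContinuousLinearMap F).map_tsum hsum2
      simpa using this
    rw [h2]
    rw [tsum_eq_single 0 ?_]
    · simp
    · intro n hn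
      obtain ⟨m, rfl⟩ := Nat.exists_eq_succ_of_ne_zero hn
      have hpow : (B ^ (m + 1)) y₀ = B ((B ^ m) y₀) := by
        rw [pow_succ']
        rfl
      rw [hpow]
      have : B ((B ^ m) y₀) = (-s) • l (F y₀) ((B ^ m) y₀) := rfl
      rw [this, map_smul, key1, smul_zero, smul_zero]
  refine ⟨key2, ?_, ?_⟩
  · simp
  · intro s
    have h1 : HasDerivAt (fun u : ℝ => NormedSpace.exp (u • A))
        (NormedSpace.exp ((-s) • A) * A) (-s) := hasDerivAt_exp_smul_const A (-s)
    have hneg : HasDerivAt (fun s' : ℝ => -s') (-1 : ℝ) s := by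
      simpa using (hasDerivAt_neg s)
    have h2 : HasDerivAt (fun s' : ℝ => NormedSpace.exp ((-s') • A))
        ((-1 : ℝ) • (NormedSpace.exp ((-s) • A) * A)) s := h1.scomp s hneg
    have h3 := h2.clm_apply (hasDerivAt_const s y₀)
    have hcomm : Commute (NormedSpace.exp ((-s) • A)) A :=
      (((Commute.refl A).smul_left (-s)).exp_left)
    have hval : ((-1 : ℝ) • (NormedSpace.exp ((-s) • A) * A)) y₀
          + NormedSpace.exp ((-s) • A) 0
        = l (NormedSpace.exp ((-s) • A) y₀) (F (NormedSpace.exp ((-s) • A) y₀)) := by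
      rw [key2 s, hanti (NormedSpace.exp ((-s) • A) y₀) (F y₀)]
      have hmul : (NormedSpace.exp ((-s) • A) * A) y₀
          = (A * NormedSpace.exp ((-s) • A)) y₀ :=
        congrArg (fun M : g →L[ℝ] g => M y₀) hcomm.eq
      rw [ContinuousLinearMap.mul_apply, ContinuousLinearMap.mul_apply] at hmul
      have hmul2 : NormedSpace.exp ((-s) • A) (A y₀)
          = l (F y₀) (NormedSpace.exp ((-s) • A) y₀) := by
        rw [hmul]; exact hAapp _
      simp only [ContinuousLinearMap.smul_apply, neg_smul, one_smul, map_zero, add_zero,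
        ContinuousLinearMap.neg_apply, ContinuousLinearMap.mul_apply, neg_inj]
      rw [neg_smul] at hmul2
      exact hmul2
    rw [← hval]
    exact h3
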